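/- Let (θ^t)_{t≥0} be the Population EM iterates for Model 1. If the initial point satisfies ⟨θ^0, θ*⟩ = 0, then θ^t → 0 as t → ∞. -/

import Mathlib

open MeasureTheory Real Filter InnerProductGeometry RealInnerProductSpace

/-- Standard Gaussian density on `ℝ^d` (identity covariance, mean zero). -/
noncomputable def gpdf (d : ℕ) (x : EuclideanSpace ℝ (Fin d)) : ℝ :=
  (2 * π) ^ (-(d : ℝ) / 2) * Real.exp (-‖x‖ ^ 2 / 2)

/-- `w_d(y, θ) = φ_d(y − θ)/(φ_d(y − θ) + φ_d(y + θ))`. -/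
noncomputable def w1 (d : ℕ) (y θ : EuclideanSpace ℝ (Fin d)) : ℝ :=
  gpdf d (y - θ) / (gpdf d (y - θ) + gpdf d (y + θ))

/-- The density of the mixture `0.5 N(−θ*, I_d) + 0.5 N(θ*, I_d)`. -/
noncomputable def mix1 (d : ℕ) (θs y : EuclideanSpace ℝ (Fin d)) : ℝ :=
  (gpdf d (y - θs) + gpdf d (y + θs)) / 2

/-- Population EM iterates for Model 1:
`θ^{t+1} = ∫ (2 w_d(y, θ^t) − 1) · y · f(y) dy`. -/
noncomputable def em1 (d : ℕ) (θs θ0 : EuclideanSpace ℝ (Fin d)) :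
    ℕ → EuclideanSpace ℝ (Fin d)
  | 0 => θ0
  | t + 1 => ∫ y, ((2 * w1 d y (em1 d θs θ0 t) - 1) * mix1 d θs y) • y

lemma abs_sinh_lt_cosh (x : ℝ) : |Real.sinh x| < Real.cosh x := by
  rcases abs_cases (Real.sinh x) with ⟨h, _⟩ | ⟨h, _⟩
  · rw [h]; exact Real.sinh_lt_cosh x
  · rw [h, ← Real.sinh_neg, ← Real.cosh_neg]; exact Real.sinh_lt_cosh (-x)

lemma abs_tanh_le_one (x : ℝ) : |Real.tanh x| ≤ 1 := by
  rw [Real.tanh_eq_sinh_div_cosh, abs_div, abs_of_pos (Real.cosh_pos x)]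
  exact div_le_one_of_le₀ (abs_sinh_lt_cosh x).le (Real.cosh_pos x).le

lemma my_continuous_tanh : Continuous Real.tanh := by
  have : Real.tanh = fun x => Real.sinh x / Real.cosh x := by
    funext x; exact Real.tanh_eq_sinh_div_cosh x
  rw [this]
  exact Real.continuous_sinh.div Real.continuous_cosh fun x => (Real.cosh_pos x).ne'

lemma tanh_nonneg {x : ℝ} (hx : 0 ≤ x) : 0 ≤ Real.tanh x := by
  rw [Real.tanh_eq_sinh_div_cosh]
  exact div_nonneg (Real.sinh_nonneg_iff.mpr hx) (Real.cosh_pos x).le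

lemma tanh_lt_self {x : ℝ} (hx : 0 < x) : Real.tanh x < x := by
  have key : Real.sinh x < x * Real.cosh x := by
    set f : ℝ → ℝ := fun x => x * Real.cosh x - Real.sinh x with hf
    have hder : ∀ y : ℝ, HasDerivAt f (y * Real.sinh y) y := by
      intro y
      have := ((hasDerivAt_id y).mul (Real.hasDerivAt_cosh y)).sub (Real.hasDerivAt_sinh y)
      refine this.congr_deriv ?_
      simp only [one_mul, id_eq]; ring
    have hmono : StrictMonoOn f (Set.Ici (0:ℝ)) := by
      apply strictMonoOn_of_deriv_pos (convex_Ici 0)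
      · exact (Continuous.sub (continuous_id.mul Real.continuous_cosh)
          Real.continuous_sinh).continuousOn
      · intro y hy
        rw [interior_Ici] at hy
        rw [(hder y).deriv]
        exact mul_pos hy (Real.sinh_pos_iff.mpr hy)
    have h0 : f 0 < f x := hmono (by simp) (le_of_lt hx) hx
    simp only [hf, zero_mul, Real.sinh_zero, sub_zero, zero_sub, neg_zero] at h0
    linarith
  rw [Real.tanh_eq_sinh_div_cosh, div_lt_iff₀ (Real.cosh_pos x)]
  exact key

lemma tanh_le_self {x : ℝ} (hx : 0 ≤ x) : Real.tanh x ≤ x := by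
  rcases eq_or_lt_of_le hx with h | h
  · simp [← h]
  · exact (tanh_lt_self h).le

lemma abs_tanh_le_abs (x : ℝ) : |Real.tanh x| ≤ |x| := by
  rcases le_or_gt 0 x with h | h
  · rw [abs_of_nonneg (tanh_nonneg h), abs_of_nonneg h]; exact tanh_le_self h
  · have h1 : 0 ≤ Real.tanh (-x) := tanh_nonneg (by linarith)
    rw [Real.tanh_neg] at h1
    rw [abs_of_nonpos (by linarith), abs_of_neg h, ← Real.tanh_neg]
    exact tanh_le_self (by linarith)

lemma mul_exp_bound {x : ℝ} (hx : 0 ≤ x) : x ≤ 4 * Real.exp (x^2/8) := by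
  rcases le_or_gt x 4 with h | h
  · nlinarith [Real.one_le_exp (by positivity : (0:ℝ) ≤ x^2/8)]
  · nlinarith [Real.add_one_le_exp (x^2/8)]


noncomputable def c0 : ℝ := (Real.sqrt (2*π))⁻¹

lemma c0_pos : 0 < c0 := by
  have : 0 < Real.sqrt (2*π) := Real.sqrt_pos.mpr (by positivity)
  exact inv_pos.mpr this

lemma c0e_pos (s : ℝ) : 0 < c0 * Real.exp (-s^2/2) := mul_pos c0_pos (Real.exp_pos _)

lemma exp2_eq : (fun s : ℝ => Real.exp (-s^2/2)) = fun s => Real.exp (-(1/2 : ℝ)*s^2) := by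
  funext s; congr 1; ring

lemma integrable_exp2 : Integrable (fun s : ℝ => Real.exp (-s^2/2)) := by
  rw [exp2_eq]; exact integrable_exp_neg_mul_sq (by norm_num)

lemma neg_half_sq : ∀ s : ℝ, -(1/2:ℝ)*s^2 = -s^2/2 := fun s => by ring

lemma integral_exp2 : ∫ s : ℝ, Real.exp (-s^2/2) = Real.sqrt (2*π) := by
  rw [exp2_eq, integral_gaussian, show ((π:ℝ) / (1/2)) = 2*π by ring]

lemma integrable_abs_exp2 : Integrable (fun s : ℝ => |s| * Real.exp (-s^2/2)) := by
  have h := (integrable_mul_exp_neg_mul_sq (b := (1/2:ℝ)) (by norm_num)).abs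
  simp_rw [abs_mul, abs_of_pos (Real.exp_pos _), neg_half_sq] at h
  exact h

lemma integrable_sq_exp2 : Integrable (fun s : ℝ => s^2 * Real.exp (-s^2/2)) := by
  have h := integrable_rpow_mul_exp_neg_mul_sq (b := (1/2:ℝ)) (by norm_num) (s := 2) (by norm_num)
  have h2 : ∀ x : ℝ, x ^ (2:ℝ) = x ^ 2 := fun x => by
    rw [show (2:ℝ) = ((2:ℕ):ℝ) by norm_num, Real.rpow_natCast]
  simp_rw [h2, neg_half_sq] at h
  exact h

lemma tendsto_mul_exp2_atTop : Tendsto (fun x : ℝ => x * Real.exp (-x^2/2)) atTop (nhds 0) := by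
  have hb : Tendsto (fun x : ℝ => 4 * Real.exp (-(3*x^2/8))) atTop (nhds 0) := by
    have h1 : Tendsto (fun x : ℝ => -(3*x^2/8)) atTop atBot := by
      have h2 : Tendsto (fun x : ℝ => x^2) atTop atTop := tendsto_pow_atTop (two_ne_zero)
      have h3 : Tendsto (fun x : ℝ => 3*x^2/8) atTop atTop := by
        apply Tendsto.atTop_div_const (by norm_num)
        exact h2.const_mul_atTop (by norm_num)
      exact tendsto_neg_atBot_iff.mpr h3
    have := (Real.tendsto_exp_atBot.comp h1).const_mul (4:ℝ)
    simpa using this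
  apply squeeze_zero' ?_ ?_ hb
  · filter_upwards [eventually_ge_atTop (0:ℝ)] with x hx
    positivity
  · filter_upwards [eventually_ge_atTop (0:ℝ)] with x hx
    have h1 : x ≤ 4 * Real.exp (x^2/8) := mul_exp_bound hx
    have h2 : 0 < Real.exp (-x^2/2) := Real.exp_pos _
    calc x * Real.exp (-x^2/2) ≤ (4 * Real.exp (x^2/8)) * Real.exp (-x^2/2) := by
          exact mul_le_mul_of_nonneg_right h1 h2.le
      _ = 4 * Real.exp (-(3*x^2/8)) := by rw [mul_assoc, ← Real.exp_add]; ring_nf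
lemma tendsto_mul_exp2_atBot : Tendsto (fun x : ℝ => x * Real.exp (-x^2/2)) atBot (nhds 0) := by
  have h := (tendsto_mul_exp2_atTop.comp tendsto_neg_atBot_atTop).neg
  simp only [Function.comp_def, neg_zero] at h
  convert h using 2 with x
  ring_nf

lemma integral_sq_exp2 : ∫ s : ℝ, s^2 * Real.exp (-s^2/2) = Real.sqrt (2*π) := by
  have hder : ∀ x : ℝ, HasDerivAt (fun x : ℝ => -x * Real.exp (-x^2/2))
      ((x^2 - 1) * Real.exp (-x^2/2)) x := by
    intro x
    have h1 : HasDerivAt (fun x : ℝ => -x^2/2) (-x) x := by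
      have := ((hasDerivAt_pow 2 x).div_const 2).neg
      refine (this.congr_deriv (by simp)).congr_of_eventuallyEq (Eventually.of_forall fun y => ?_)
      show -y^2/2 = -(y^2/2); ring
    have h2 := h1.exp
    have h3 := ((hasDerivAt_id x).neg).mul h2
    refine h3.congr_deriv ?_
    simp only [Pi.neg_apply, id_eq]
    ring
  have hint : Integrable (fun x : ℝ => (x^2 - 1) * Real.exp (-x^2/2)) := by
    have := integrable_sq_exp2.sub integrable_exp2
    exact this.congr (Eventually.of_forall fun x => by simp only [Pi.sub_apply]; ring)
  have hbot : Tendsto (fun x : ℝ => -x * Real.exp (-x^2/2)) atBot (nhds 0) := by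
    have := tendsto_mul_exp2_atBot.neg
    simpa [neg_mul] using this
  have htop : Tendsto (fun x : ℝ => -x * Real.exp (-x^2/2)) atTop (nhds 0) := by
    have := tendsto_mul_exp2_atTop.neg
    simpa [neg_mul] using this
  have key := integral_of_hasDerivAt_of_tendsto hder hint hbot htop
  rw [sub_zero] at key
  have split : ∫ x : ℝ, (x^2 - 1) * Real.exp (-x^2/2)
      = (∫ x : ℝ, x^2 * Real.exp (-x^2/2)) - ∫ x : ℝ, Real.exp (-x^2/2) := by
    rw [← integral_sub integrable_sq_exp2 integrable_exp2]
    congr 1; funext x; ring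
  rw [split] at key
  rw [integral_exp2] at key
  linarith

noncomputable def g1 (a : ℝ) : ℝ := ∫ s : ℝ, Real.tanh (a*s) * s * (c0 * Real.exp (-s^2/2))

lemma g1_integrand_integrable (a : ℝ) :
    Integrable (fun s : ℝ => Real.tanh (a*s) * s * (c0 * Real.exp (-s^2/2))) := by
  apply Integrable.mono' (integrable_abs_exp2.const_mul c0)
  · apply Continuous.aestronglyMeasurable
    exact ((my_continuous_tanh.comp (continuous_const.mul continuous_id)).mul
      continuous_id).mul (continuous_const.mul ((continuous_pow 2).neg.div_const 2).rexp)
  · refine Eventually.of_forall fun s => ?_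
    rw [Real.norm_eq_abs, abs_mul, abs_mul]
    rw [abs_of_pos (c0e_pos s)]
    calc |Real.tanh (a*s)| * |s| * (c0 * Real.exp (-s^2/2))
        ≤ 1 * |s| * (c0 * Real.exp (-s^2/2)) := by
          apply mul_le_mul_of_nonneg_right (mul_le_mul_of_nonneg_right
            (abs_tanh_le_one _) (abs_nonneg _)) (c0e_pos s).le
      _ = c0 * (|s| * Real.exp (-s^2/2)) := by ring

lemma sq_integrand_integrable (a : ℝ) :
    Integrable (fun s : ℝ => a * s^2 * (c0 * Real.exp (-s^2/2))) := by
  have := (integrable_sq_exp2.const_mul (a * c0))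
  convert this using 1
  funext s; ring

lemma integral_sq_c0 (a : ℝ) : ∫ s : ℝ, a * s^2 * (c0 * Real.exp (-s^2/2)) = a := by
  have : ∀ s : ℝ, a * s^2 * (c0 * Real.exp (-s^2/2)) = (a*c0) * (s^2 * Real.exp (-s^2/2)) :=
    fun s => by ring
  simp_rw [this]
  rw [integral_const_mul, integral_sq_exp2, c0]
  have h : Real.sqrt (2*π) ≠ 0 := by positivity
  field_simp

lemma tanh_mul_le_sq {a s : ℝ} (ha : 0 ≤ a) : Real.tanh (a*s) * s ≤ a * s^2 := by
  calc Real.tanh (a*s) * s ≤ |Real.tanh (a*s) * s| := le_abs_self _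
    _ = |Real.tanh (a*s)| * |s| := abs_mul _ _
    _ ≤ |a*s| * |s| := mul_le_mul_of_nonneg_right (abs_tanh_le_abs _) (abs_nonneg _)
    _ = a * (|s| * |s|) := by rw [abs_mul, abs_of_nonneg ha]; ring
    _ = a * s^2 := by rw [abs_mul_abs_self]; ring

lemma g1_le_self {a : ℝ} (ha : 0 ≤ a) : g1 a ≤ a := by
  have h := integral_mono (g1_integrand_integrable a) (sq_integrand_integrable a)
    (fun s => mul_le_mul_of_nonneg_right (tanh_mul_le_sq ha) (c0e_pos s).le)
  rw [integral_sq_c0] at h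
  exact h

lemma g1_nonneg {a : ℝ} (ha : 0 ≤ a) : 0 ≤ g1 a := by
  apply integral_nonneg
  intro s
  have : 0 ≤ Real.tanh (a*s) * s := by
    rcases le_or_gt 0 s with h | h
    · exact mul_nonneg (tanh_nonneg (mul_nonneg ha h)) h
    · have h1 : Real.tanh (a*s) ≤ 0 := by
        have := tanh_nonneg (x := -(a*s)) (by nlinarith)
        rw [Real.tanh_neg] at this; linarith
      nlinarith
  exact mul_nonneg this (c0e_pos s).le

lemma g1_lt_self {a : ℝ} (ha : 0 < a) : g1 a < a := by
  have key : 0 < ∫ s : ℝ, (a * s^2 - Real.tanh (a*s) * s) * (c0 * Real.exp (-s^2/2)) := by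
    have hnn : 0 ≤ fun s : ℝ => (a * s^2 - Real.tanh (a*s) * s) * (c0 * Real.exp (-s^2/2)) := by
      intro s
      have := tanh_mul_le_sq (s := s) ha.le
      have hc := (c0e_pos s).le
      simp only [Pi.zero_apply]
      exact mul_nonneg (by linarith) hc
    have hint : Integrable (fun s : ℝ =>
        (a * s^2 - Real.tanh (a*s) * s) * (c0 * Real.exp (-s^2/2))) := by
      have h2 : (fun s : ℝ => (a * s^2 - Real.tanh (a*s) * s) * (c0 * Real.exp (-s^2/2)))
          = fun s => a * s^2 * (c0 * Real.exp (-s^2/2))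
            - Real.tanh (a*s) * s * (c0 * Real.exp (-s^2/2)) := funext fun s => by ring
      rw [h2]
      exact (sq_integrand_integrable a).sub (g1_integrand_integrable a)
    rw [integral_pos_iff_support_of_nonneg hnn hint]
    have hsub : ({0}ᶜ : Set ℝ) ⊆ Function.support
        (fun s : ℝ => (a * s^2 - Real.tanh (a*s) * s) * (c0 * Real.exp (-s^2/2))) := by
      intro s hs
      simp only [Set.mem_compl_iff, Set.mem_singleton_iff] at hs
      have hstrict : Real.tanh (a*s) * s < a * s^2 := by
        rcases lt_or_gt_of_ne hs with h | h
        · have h1 : Real.tanh (a*s) > a*s := by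
            have := tanh_lt_self (x := -(a*s)) (by nlinarith)
            rw [Real.tanh_neg] at this; linarith
          nlinarith
        · have h1 : Real.tanh (a*s) < a*s := tanh_lt_self (by nlinarith)
          nlinarith
      have hc := c0e_pos s
      simp only [Function.mem_support]
      exact (mul_pos (by linarith) hc).ne'
    have hvol : volume ({0}ᶜ : Set ℝ) = ⊤ := by
      have h0 : volume ({0} : Set ℝ) = 0 := measure_singleton 0
      have hcompl := measure_add_measure_compl (μ := volume) (measurableSet_singleton (0:ℝ))
      rw [h0, zero_add, Real.volume_univ] at hcompl
      exact hcompl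
    calc (0:ENNReal) < volume ({0}ᶜ : Set ℝ) := by rw [hvol]; exact ENNReal.zero_lt_top
      _ ≤ _ := measure_mono hsub
  have hsplit : ∫ s : ℝ, (a * s^2 - Real.tanh (a*s) * s) * (c0 * Real.exp (-s^2/2))
      = a - g1 a := by
    have : ∀ s : ℝ, (a * s^2 - Real.tanh (a*s) * s) * (c0 * Real.exp (-s^2/2))
        = a * s^2 * (c0 * Real.exp (-s^2/2)) - Real.tanh (a*s) * s * (c0 * Real.exp (-s^2/2)) :=
      fun s => by ring
    simp_rw [this]
    rw [integral_sub (sq_integrand_integrable a) (g1_integrand_integrable a), integral_sq_c0]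
    rfl
  rw [hsplit] at key
  linarith

lemma g1_continuous : Continuous g1 := by
  apply MeasureTheory.continuous_of_dominated
    (bound := fun s : ℝ => c0 * (|s| * Real.exp (-s^2/2)))
  · intro a
    apply Continuous.aestronglyMeasurable
    exact ((my_continuous_tanh.comp (continuous_const.mul continuous_id)).mul
      continuous_id).mul (continuous_const.mul ((continuous_pow 2).neg.div_const 2).rexp)
  · intro a
    refine Eventually.of_forall fun s => ?_
    rw [Real.norm_eq_abs, abs_mul, abs_mul]
    rw [abs_of_pos (c0e_pos s)]
    calc |Real.tanh (a*s)| * |s| * (c0 * Real.exp (-s^2/2))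
        ≤ 1 * |s| * (c0 * Real.exp (-s^2/2)) := by
          apply mul_le_mul_of_nonneg_right (mul_le_mul_of_nonneg_right
            (abs_tanh_le_one _) (abs_nonneg _)) (c0e_pos s).le
      _ = c0 * (|s| * Real.exp (-s^2/2)) := by ring
  · exact integrable_abs_exp2.const_mul c0
  · refine Eventually.of_forall fun s => ?_
    exact ((my_continuous_tanh.comp (continuous_id.mul continuous_const)).mul
      continuous_const).mul continuous_const

lemma g1_zero : g1 0 = 0 := by
  unfold g1
  simp [Real.tanh_zero]
lemma gpdf_pos (d : ℕ) (x : EuclideanSpace ℝ (Fin d)) : 0 < gpdf d x :=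
  mul_pos (Real.rpow_pos_of_pos (by positivity) _) (Real.exp_pos _)

lemma gpdf_norm (d : ℕ) {x y : EuclideanSpace ℝ (Fin d)} (h : ‖x‖ = ‖y‖) :
    gpdf d x = gpdf d y := by unfold gpdf; rw [h]

lemma continuous_gpdf (d : ℕ) : Continuous (gpdf d) :=
  continuous_const.mul (((continuous_norm.pow 2).neg.div_const 2).rexp)

lemma mix1_nonneg (d : ℕ) (θs y : EuclideanSpace ℝ (Fin d)) : 0 ≤ mix1 d θs y := by
  unfold mix1
  have h1 := gpdf_pos d (y - θs); have h2 := gpdf_pos d (y + θs); linarith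

lemma continuous_mix1 (d : ℕ) (θs : EuclideanSpace ℝ (Fin d)) : Continuous (mix1 d θs) := by
  unfold mix1
  exact (((continuous_gpdf d).comp (continuous_id.sub continuous_const)).add
    ((continuous_gpdf d).comp (continuous_id.add continuous_const))).div_const 2

lemma tanh_ratio (p q : ℝ) :
    2 * (Real.exp p / (Real.exp p + Real.exp q)) - 1 = Real.tanh ((p - q)/2) := by
  rw [Real.tanh_eq_sinh_div_cosh, Real.sinh_eq, Real.cosh_eq]
  have h1 : Real.exp p = Real.exp ((p-q)/2) * Real.exp ((p+q)/2) := by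
    rw [← Real.exp_add]; ring_nf
  have h2 : Real.exp q = Real.exp (-((p-q)/2)) * Real.exp ((p+q)/2) := by
    rw [← Real.exp_add]; ring_nf
  rw [h1, h2]
  have hA := Real.exp_pos ((p-q)/2)
  have hB := Real.exp_pos (-((p-q)/2))
  have hM := Real.exp_pos ((p+q)/2)
  have hden : Real.exp ((p-q)/2) * Real.exp ((p+q)/2)
      + Real.exp (-((p-q)/2)) * Real.exp ((p+q)/2) ≠ 0 := by positivity
  have hden2 : Real.exp ((p-q)/2) + Real.exp (-((p-q)/2)) ≠ 0 := by positivity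
  field_simp
  ring

lemma two_w1_sub_one (d : ℕ) (y θ : EuclideanSpace ℝ (Fin d)) :
    2 * w1 d y θ - 1 = Real.tanh ⟪y, θ⟫ := by
  unfold w1 gpdf
  set C : ℝ := (2 * π) ^ (-(d : ℝ) / 2) with hC
  have hCpos : 0 < C := Real.rpow_pos_of_pos (by positivity) _
  set p : ℝ := -‖y - θ‖^2/2
  set q : ℝ := -‖y + θ‖^2/2
  have hfac : C * Real.exp p / (C * Real.exp p + C * Real.exp q)
      = Real.exp p / (Real.exp p + Real.exp q) := by
    rw [← mul_add, mul_div_mul_left _ _ hCpos.ne']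
  rw [hfac, tanh_ratio]
  congr 1
  have h1 : ‖y + θ‖^2 = ‖y‖^2 + 2*⟪y,θ⟫ + ‖θ‖^2 := norm_add_sq_real y θ
  have h2 : ‖y - θ‖^2 = ‖y‖^2 - 2*⟪y,θ⟫ + ‖θ‖^2 := norm_sub_sq_real y θ
  simp only [p, q]
  rw [h1, h2]; ring

lemma abs_two_w1_sub_one (d : ℕ) (y θ : EuclideanSpace ℝ (Fin d)) :
    |2 * w1 d y θ - 1| ≤ 1 := by rw [two_w1_sub_one]; exact abs_tanh_le_one _

lemma integrable_gauss8 (d : ℕ) :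
    Integrable (fun y : EuclideanSpace ℝ (Fin d) => Real.exp (-‖y‖^2/8)) := by
  have h := (GaussianFourier.integrable_cexp_neg_mul_sq_norm_add (V := EuclideanSpace ℝ (Fin d))
    (b := (8:ℂ)⁻¹) (by norm_num) 0 0).norm
  convert h using 2 with y
  rw [Complex.norm_exp]
  have : (↑‖y‖ ^ 2 : ℂ).re = ‖y‖ ^ 2 := by
    rw [← Complex.ofReal_pow, Complex.ofReal_re]
  simp [this]
  ring
lemma gpdf_sub_le (d : ℕ) (c y : EuclideanSpace ℝ (Fin d)) :
    gpdf d (y - c) ≤ (2 * π) ^ (-(d:ℝ)/2) * Real.exp (‖c‖^2/2) * Real.exp (-‖y‖^2/4) := by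
  unfold gpdf
  rw [mul_assoc, ← Real.exp_add]
  apply mul_le_mul_of_nonneg_left _ (Real.rpow_pos_of_pos (by positivity) _).le
  apply Real.exp_le_exp.mpr
  have h1 : ‖y‖ ≤ ‖y - c‖ + ‖c‖ := by
    calc ‖y‖ = ‖(y - c) + c‖ := by rw [sub_add_cancel]
      _ ≤ ‖y - c‖ + ‖c‖ := norm_add_le _ _
  have h2 : 0 ≤ ‖y - c‖ := norm_nonneg _
  have h3 : 0 ≤ ‖c‖ := norm_nonneg _
  have h4 : ‖y‖^2 ≤ (‖y - c‖ + ‖c‖)^2 := by nlinarith [norm_nonneg y]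
  nlinarith [sq_nonneg (‖y - c‖ - ‖c‖)]

lemma mix1_le (d : ℕ) (θs y : EuclideanSpace ℝ (Fin d)) :
    mix1 d θs y ≤ (2 * π) ^ (-(d:ℝ)/2) * Real.exp (‖θs‖^2/2) * Real.exp (-‖y‖^2/4) := by
  unfold mix1
  have h1 := gpdf_sub_le d θs y
  have h2 : gpdf d (y + θs) ≤ (2 * π) ^ (-(d:ℝ)/2) * Real.exp (‖θs‖^2/2) * Real.exp (-‖y‖^2/4) := by
    have := gpdf_sub_le d (-θs) y
    rw [sub_neg_eq_add, norm_neg] at this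
    exact this
  linarith

lemma mul_exp_bound' {x : ℝ} (hx : 0 ≤ x) : x * Real.exp (-x^2/8) ≤ 4 := by
  have h := mul_exp_bound hx
  have he : Real.exp (x^2/8) * Real.exp (-x^2/8) = 1 := by
    rw [← Real.exp_add, show x^2/8 + -x^2/8 = 0 by ring, Real.exp_zero]
  have hp := Real.exp_pos (-x^2/8)
  nlinarith

lemma norm_mix1_le (d : ℕ) (θs y : EuclideanSpace ℝ (Fin d)) :
    ‖y‖ * mix1 d θs y
      ≤ 4 * ((2 * π) ^ (-(d:ℝ)/2) * Real.exp (‖θs‖^2/2)) * Real.exp (-‖y‖^2/8) := by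
  have h1 := mix1_le d θs y
  have hsplit : Real.exp (-‖y‖^2/4) = Real.exp (-‖y‖^2/8) * Real.exp (-‖y‖^2/8) := by
    rw [← Real.exp_add]; ring_nf
  have h2 := mul_exp_bound' (norm_nonneg y)
  have hC : (0:ℝ) < (2 * π) ^ (-(d:ℝ)/2) * Real.exp (‖θs‖^2/2) := by
    have := Real.rpow_pos_of_pos (show (0:ℝ) < 2*π by positivity) (-(d:ℝ)/2)
    positivity
  have hy := norm_nonneg y
  have he8 := Real.exp_pos (-‖y‖^2/8)
  have hmix := mix1_nonneg d θs y
  calc ‖y‖ * mix1 d θs y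
      ≤ ‖y‖ * ((2 * π) ^ (-(d:ℝ)/2) * Real.exp (‖θs‖^2/2) * Real.exp (-‖y‖^2/4)) :=
        mul_le_mul_of_nonneg_left h1 hy
    _ = (‖y‖ * Real.exp (-‖y‖^2/8)) * ((2 * π) ^ (-(d:ℝ)/2) * Real.exp (‖θs‖^2/2))
        * Real.exp (-‖y‖^2/8) := by rw [hsplit]; ring
    _ ≤ 4 * ((2 * π) ^ (-(d:ℝ)/2) * Real.exp (‖θs‖^2/2)) * Real.exp (-‖y‖^2/8) := by
        apply mul_le_mul_of_nonneg_right _ he8.le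
        exact mul_le_mul_of_nonneg_right h2 hC.le

lemma integrable_dom {d : ℕ} {F : Type*} [NormedAddCommGroup F]
    {f : EuclideanSpace ℝ (Fin d) → F} (hm : AEStronglyMeasurable f volume) (C : ℝ)
    (h : ∀ y, ‖f y‖ ≤ C * Real.exp (-‖y‖^2/8)) : Integrable f :=
  (((integrable_gauss8 d)).const_mul C).mono' hm (Eventually.of_forall h)

lemma continuous_w1 (d : ℕ) (θ : EuclideanSpace ℝ (Fin d)) :
    Continuous (fun y => w1 d y θ) := by
  unfold w1
  apply Continuous.div
  · exact (continuous_gpdf d).comp (continuous_id.sub continuous_const)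
  · exact ((continuous_gpdf d).comp (continuous_id.sub continuous_const)).add
      ((continuous_gpdf d).comp (continuous_id.add continuous_const))
  · intro y
    have h1 := gpdf_pos d (y - θ); have h2 := gpdf_pos d (y + θ)
    positivity

lemma integrable_main (d : ℕ) (θs θ : EuclideanSpace ℝ (Fin d)) :
    Integrable (fun y => ((2 * w1 d y θ - 1) * mix1 d θs y) • y) := by
  apply integrable_dom (C := 4 * ((2 * π) ^ (-(d:ℝ)/2) * Real.exp (‖θs‖^2/2)))
  · intro y
    rw [norm_smul, Real.norm_eq_abs, abs_mul, abs_of_nonneg (mix1_nonneg d θs y)]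
    calc |2 * w1 d y θ - 1| * mix1 d θs y * ‖y‖
        ≤ 1 * mix1 d θs y * ‖y‖ := by
          apply mul_le_mul_of_nonneg_right (mul_le_mul_of_nonneg_right
            (abs_two_w1_sub_one d y θ) (mix1_nonneg d θs y)) (norm_nonneg y)
      _ = ‖y‖ * mix1 d θs y := by ring
      _ ≤ _ := norm_mix1_le d θs y
  · apply Continuous.aestronglyMeasurable
    exact (((continuous_const.mul (continuous_w1 d θ)).sub continuous_const).mul
      (continuous_mix1 d θs)).smul continuous_id

lemma integrable_tanh_inner_mix (d : ℕ) (θs : EuclideanSpace ℝ (Fin d)) (b : ℝ)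
    (u v : EuclideanSpace ℝ (Fin d)) :
    Integrable (fun y => Real.tanh (b * ⟪y, u⟫) * mix1 d θs y * ⟪y, v⟫) := by
  apply integrable_dom (C := ‖v‖ * (4 * ((2 * π) ^ (-(d:ℝ)/2) * Real.exp (‖θs‖^2/2))))
  · intro y
    rw [Real.norm_eq_abs, abs_mul, abs_mul, abs_of_nonneg (mix1_nonneg d θs y)]
    calc |Real.tanh (b * ⟪y, u⟫)| * mix1 d θs y * |⟪y, v⟫|
        ≤ 1 * mix1 d θs y * (‖y‖ * ‖v‖) := by
          apply mul_le_mul (mul_le_mul_of_nonneg_right (abs_tanh_le_one _)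
            (mix1_nonneg d θs y)) (abs_real_inner_le_norm y v) (abs_nonneg _)
          simpa using mix1_nonneg d θs y
      _ = ‖v‖ * (‖y‖ * mix1 d θs y) := by ring
      _ ≤ ‖v‖ * (4 * ((2 * π) ^ (-(d:ℝ)/2) * Real.exp (‖θs‖^2/2)) * Real.exp (-‖y‖^2/8)) :=
          mul_le_mul_of_nonneg_left (norm_mix1_le d θs y) (norm_nonneg v)
      _ = _ := by ring
  · apply Continuous.aestronglyMeasurable
    exact ((my_continuous_tanh.comp (continuous_const.mul (continuous_id.inner continuous_const))).mul
      (continuous_mix1 d θs)).mul (continuous_id.inner continuous_const)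

lemma gpdf_le_two_mix1 (d : ℕ) (c y : EuclideanSpace ℝ (Fin d)) :
    gpdf d (y - c) ≤ 2 * mix1 d c y := by
  unfold mix1
  have := gpdf_pos d (y + c)
  linarith

lemma gpdf_le_two_mix1' (d : ℕ) (c y : EuclideanSpace ℝ (Fin d)) :
    gpdf d (y + c) ≤ 2 * mix1 d c y := by
  unfold mix1
  have := gpdf_pos d (y - c)
  linarith

lemma integrable_tanh_inner_gpdf_sub (d : ℕ) (b : ℝ) (u v c : EuclideanSpace ℝ (Fin d)) :
    Integrable (fun y => Real.tanh (b * ⟪y, u⟫) * ⟪y, v⟫ * gpdf d (y - c)) := by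
  apply integrable_dom (C := ‖v‖ * (8 * ((2 * π) ^ (-(d:ℝ)/2) * Real.exp (‖c‖^2/2))))
  · intro y
    rw [Real.norm_eq_abs, abs_mul, abs_mul, abs_of_pos (gpdf_pos d (y - c))]
    calc |Real.tanh (b * ⟪y, u⟫)| * |⟪y, v⟫| * gpdf d (y - c)
        ≤ 1 * (‖y‖ * ‖v‖) * (2 * mix1 d c y) := by
          apply mul_le_mul (mul_le_mul (abs_tanh_le_one _) (abs_real_inner_le_norm y v)
            (abs_nonneg _) zero_le_one) (gpdf_le_two_mix1 d c y) (gpdf_pos d (y - c)).le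
          positivity
      _ = 2 * ‖v‖ * (‖y‖ * mix1 d c y) := by ring
      _ ≤ 2 * ‖v‖ * (4 * ((2 * π) ^ (-(d:ℝ)/2) * Real.exp (‖c‖^2/2)) * Real.exp (-‖y‖^2/8)) := by
          apply mul_le_mul_of_nonneg_left (norm_mix1_le d c y) (by positivity)
      _ = _ := by ring
  · apply Continuous.aestronglyMeasurable
    exact ((my_continuous_tanh.comp (continuous_const.mul (continuous_id.inner continuous_const))).mul
      (continuous_id.inner continuous_const)).mul
      ((continuous_gpdf d).comp (continuous_id.sub continuous_const))

lemma integrable_tanh_inner_gpdf_add (d : ℕ) (b : ℝ) (u v c : EuclideanSpace ℝ (Fin d)) :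
    Integrable (fun y => Real.tanh (b * ⟪y, u⟫) * ⟪y, v⟫ * gpdf d (y + c)) := by
  have h := integrable_tanh_inner_gpdf_sub d b u v (-c)
  simpa [sub_neg_eq_add] using h
lemma integral_odd {d : ℕ}
    (R : EuclideanSpace ℝ (Fin d) ≃ₗᵢ[ℝ] EuclideanSpace ℝ (Fin d))
    {F : EuclideanSpace ℝ (Fin d) → ℝ} (h : ∀ y, F (R y) = - F y) :
    ∫ y, F y = 0 := by
  have h1 := R.measurePreserving.integral_comp R.toHomeomorph.measurableEmbedding F
  simp_rw [h] at h1
  rw [MeasureTheory.integral_neg] at h1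
  linarith

noncomputable def refl' {d : ℕ} (w : EuclideanSpace ℝ (Fin d)) :
    EuclideanSpace ℝ (Fin d) ≃ₗᵢ[ℝ] EuclideanSpace ℝ (Fin d) :=
  Submodule.reflection (ℝ ∙ w)ᗮ

lemma refl'_self {d : ℕ} (w : EuclideanSpace ℝ (Fin d)) : refl' w w = -w :=
  Submodule.reflection_orthogonalComplement_singleton_eq_neg w

lemma refl'_fix {d : ℕ} {w x : EuclideanSpace ℝ (Fin d)} (h : ⟪w, x⟫ = 0) :
    refl' w x = x :=
  Submodule.reflection_mem_subspace_eq_self (Submodule.mem_orthogonal_singleton_iff_inner_right.mpr h)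

lemma marginal {d : ℕ} (hd : 1 ≤ d) (u : EuclideanSpace ℝ (Fin d)) (hu : ‖u‖ = 1) (a : ℝ) :
    ∫ y, Real.tanh (a * ⟪y, u⟫) * ⟪y, u⟫ * gpdf d y = g1 a := by
  have h0d : 0 < d := hd
  set i0 : Fin d := ⟨0, h0d⟩ with hi0
  set E0 : EuclideanSpace ℝ (Fin d) := EuclideanSpace.single i0 1 with hE0def
  have hE0 : ‖E0‖ = 1 := by rw [hE0def, EuclideanSpace.norm_single]; norm_num
  set R : EuclideanSpace ℝ (Fin d) ≃ₗᵢ[ℝ] EuclideanSpace ℝ (Fin d) :=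
    Submodule.reflection (ℝ ∙ (u - E0))ᗮ with hR
  have hRu : R u = E0 := Submodule.reflection_sub (by rw [hu, hE0])
  have h1 := R.symm.measurePreserving.integral_comp R.symm.toHomeomorph.measurableEmbedding
    (fun y => Real.tanh (a * ⟪y, u⟫) * ⟪y, u⟫ * gpdf d y)
  rw [← h1]
  have h2 : ∀ y : EuclideanSpace ℝ (Fin d), ⟪R.symm y, u⟫ = y i0 := by
    intro y
    calc ⟪R.symm y, u⟫ = ⟪R (R.symm y), R u⟫ := (R.inner_map_map _ _).symm
      _ = ⟪y, E0⟫ := by rw [R.apply_symm_apply, hRu]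
      _ = y i0 := by
          rw [hE0def, EuclideanSpace.inner_single_right]
          simp
  have h3 : ∀ y, gpdf d (R.symm y) = gpdf d y := fun y => gpdf_norm d (R.symm.norm_map y)
  simp only [h2, h3]
  -- product structure
  have h4 : ∀ y : EuclideanSpace ℝ (Fin d),
      gpdf d y = ∏ i : Fin d, (c0 * Real.exp (-(y i)^2/2)) := by
    intro y
    have hn : ‖y‖^2 = ∑ i, (y i)^2 := by
      rw [EuclideanSpace.norm_eq, Real.sq_sqrt (by positivity)]
      congr 1; funext i; rw [Real.norm_eq_abs, sq_abs]
    have hc : ((2 * π) ^ (-(d:ℝ)/2) : ℝ) = c0 ^ (d:ℕ) := by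
      have hc0 : c0 = (2*π) ^ (-(1:ℝ)/2) := by
        rw [c0, show (-(1:ℝ)/2) = -(1/2 : ℝ) by ring, Real.rpow_neg (by positivity),
          Real.sqrt_eq_rpow]
      rw [hc0, ← Real.rpow_natCast ((2*π) ^ (-(1:ℝ)/2)) d, ← Real.rpow_mul (by positivity)]
      congr 1; ring
    unfold gpdf
    rw [hn, hc, Finset.prod_mul_distrib, Finset.prod_const, Finset.card_univ,
      Fintype.card_fin]
    congr 1
    rw [show (-(∑ i, (y i)^2)/2 : ℝ) = ∑ i, (-(y i)^2/2) by
      rw [← Finset.sum_div, Finset.sum_neg_distrib]]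
    exact Real.exp_sum _ _
  have h5 : ∀ y : EuclideanSpace ℝ (Fin d),
      Real.tanh (a * y i0) * y i0 * gpdf d y
        = ∏ i : Fin d, ((if i = i0 then Real.tanh (a * y i) * y i else 1)
            * (c0 * Real.exp (-(y i)^2/2))) := by
    intro y
    rw [h4]
    conv_rhs => rw [Finset.prod_mul_distrib]
    rw [Finset.prod_ite_eq' Finset.univ i0 (fun i => Real.tanh (a * y i) * y i)]
    simp only [Finset.mem_univ, if_true]
  simp only [h5]
  have h6 := MeasurePreserving.integral_comp'
    (f := MeasurableEquiv.toLp 2 (Fin d → ℝ))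
    ((EuclideanSpace.volume_preserving_symm_measurableEquiv_toLp (Fin d)).symm)
    (fun y : EuclideanSpace ℝ (Fin d) =>
      ∏ i : Fin d, ((if i = i0 then Real.tanh (a * y i) * y i else 1)
        * (c0 * Real.exp (-(y i)^2/2))))
  rw [← h6]
  have h7 : ∀ x : Fin d → ℝ, ∀ i : Fin d,
      (MeasurableEquiv.toLp 2 (Fin d → ℝ) x) i = x i := by
    intro x i
    rfl
  simp only [h7]
  rw [MeasureTheory.integral_fintype_prod_volume_eq_prod
    (f := fun i s => (if i = i0 then Real.tanh (a * s) * s else 1)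
      * (c0 * Real.exp (-s^2/2)))]
  have h8 : ∀ i : Fin d, (∫ s : ℝ, (if i = i0 then Real.tanh (a * s) * s else 1)
      * (c0 * Real.exp (-s^2/2))) = if i = i0 then g1 a else 1 := by
    intro i
    by_cases hi : i = i0
    · simp only [hi, if_true]
      rfl
    · simp only [hi, if_false, one_mul]
      rw [MeasureTheory.integral_const_mul, integral_exp2, c0]
      exact inv_mul_cancel₀ (by positivity)
  simp only [h8]
  rw [Finset.prod_ite_eq' Finset.univ i0 (fun _ => g1 a)]
  simp
lemma mix1_comp (d : ℕ) (θs : EuclideanSpace ℝ (Fin d))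
    (R : EuclideanSpace ℝ (Fin d) ≃ₗᵢ[ℝ] EuclideanSpace ℝ (Fin d)) (hR : R θs = θs)
    (y : EuclideanSpace ℝ (Fin d)) : mix1 d θs (R y) = mix1 d θs y := by
  unfold mix1
  have h1 : gpdf d (R y - θs) = gpdf d (y - θs) := by
    apply gpdf_norm
    conv_lhs => rw [← hR]
    rw [← map_sub, R.norm_map]
  have h2 : gpdf d (R y + θs) = gpdf d (y + θs) := by
    apply gpdf_norm
    conv_lhs => rw [← hR]
    rw [← map_add, R.norm_map]
  rw [h1, h2]

lemma em_step {d : ℕ} (hd : 1 ≤ d) (θs u : EuclideanSpace ℝ (Fin d))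
    (hu : ‖u‖ = 1) (hus : ⟪u, θs⟫ = 0) (a : ℝ) :
    (∫ y, ((2 * w1 d y (a • u) - 1) * mix1 d θs y) • y) = g1 a • u := by
  set I : EuclideanSpace ℝ (Fin d) := ∫ y, ((2 * w1 d y (a • u) - 1) * mix1 d θs y) • y with hI
  have hInt := integrable_main d θs (a • u)
  have hIv : ∀ v : EuclideanSpace ℝ (Fin d),
      ⟪v, I⟫ = ∫ y, Real.tanh (a * ⟪y, u⟫) * mix1 d θs y * ⟪v, y⟫ := by
    intro v
    rw [hI, ← integral_inner hInt v]
    congr 1; funext y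
    rw [real_inner_smul_right, two_w1_sub_one, real_inner_smul_right]
  have hperp : ∀ v : EuclideanSpace ℝ (Fin d), ⟪u, v⟫ = 0 → ⟪v, I⟫ = 0 := by
    intro v hv
    set cc : ℝ := ⟪θs, v⟫ / ‖θs‖^2 with hcc
    set v' : EuclideanSpace ℝ (Fin d) := v - cc • θs with hv'def
    have hv'u : ⟪u, v'⟫ = 0 := by
      rw [hv'def, inner_sub_right, real_inner_smul_right, hus, hv]; ring
    have hθsv' : ⟪θs, v'⟫ = 0 := by
      rcases eq_or_ne θs 0 with h | h
      · rw [h]; exact inner_zero_left v'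
      · rw [hv'def, inner_sub_right, real_inner_smul_right, real_inner_self_eq_norm_sq, hcc]
        have hn : ‖θs‖^2 ≠ 0 := by
          have := norm_pos_iff.mpr h
          positivity
        field_simp
        ring
    have hIθs : ⟪θs, I⟫ = 0 := by
      rw [hIv θs]
      apply integral_odd (refl' u)
      intro y
      have hRθs : refl' u θs = θs := refl'_fix hus
      have e1 : ⟪refl' u y, u⟫ = -⟪y, u⟫ := by
        have h := (refl' u).inner_map_map y u
        rw [refl'_self, inner_neg_right] at h
        linarith
      have e2 : ⟪θs, refl' u y⟫ = ⟪θs, y⟫ := by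
        have h := (refl' u).inner_map_map θs y
        rw [hRθs] at h
        exact h
      rw [e1, e2, mix1_comp d θs (refl' u) hRθs, mul_neg, Real.tanh_neg]
      ring
    have hIv' : ⟪v', I⟫ = 0 := by
      rw [hIv v']
      apply integral_odd (refl' v')
      intro y
      have hRθs : refl' v' θs = θs := refl'_fix (by rw [real_inner_comm]; exact hθsv')
      have hRu : refl' v' u = u := refl'_fix (by rw [real_inner_comm]; exact hv'u)
      have e1 : ⟪refl' v' y, u⟫ = ⟪y, u⟫ := by
        have h := (refl' v').inner_map_map y u
        rw [hRu] at h
        exact h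
      have e2 : ⟪v', refl' v' y⟫ = -⟪v', y⟫ := by
        have h := (refl' v').inner_map_map v' y
        rw [refl'_self, inner_neg_left] at h
        linarith
      rw [e1, e2, mix1_comp d θs (refl' v') hRθs]
      ring
    have hvsum : v = v' + cc • θs := by rw [hv'def]; abel
    rw [hvsum, inner_add_left, real_inner_smul_left, hIv', hIθs]
    ring
  have hu1 : ⟪u, u⟫ = (1:ℝ) := by
    rw [real_inner_self_eq_norm_sq, hu]; norm_num
  have hJeq : I = ⟪u, I⟫ • u := by
    set J : EuclideanSpace ℝ (Fin d) := I - ⟪u, I⟫ • u with hJdef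
    have hJu : ⟪u, J⟫ = 0 := by
      rw [hJdef, inner_sub_right, real_inner_smul_right, hu1]; ring
    have h2 := hperp J hJu
    have hJJ : ⟪J, J⟫ = (0:ℝ) := by
      calc ⟪J, J⟫ = ⟪J, I⟫ - ⟪u, I⟫ * ⟪J, u⟫ := by
            conv_lhs => rw [hJdef]
            rw [inner_sub_right, real_inner_smul_right]
      _ = 0 := by
            rw [h2, show ⟪J, u⟫ = (0:ℝ) from (real_inner_comm u J).trans hJu]
            ring
    have hJ0 : J = 0 := inner_self_eq_zero.mp hJJ
    have := sub_eq_zero.mp (hJdef ▸ hJ0)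
    exact this
  have hval : ⟪u, I⟫ = g1 a := by
    rw [hIv u]
    have hsplit : ∀ y : EuclideanSpace ℝ (Fin d),
        Real.tanh (a * ⟪y, u⟫) * mix1 d θs y * ⟪u, y⟫
          = (Real.tanh (a * ⟪y, u⟫) * ⟪y, u⟫ * gpdf d (y - θs)
            + Real.tanh (a * ⟪y, u⟫) * ⟪y, u⟫ * gpdf d (y + θs)) / 2 := by
      intro y
      unfold mix1
      rw [real_inner_comm u y]
      ring
    simp only [hsplit]
    rw [integral_div, integral_add (integrable_tanh_inner_gpdf_sub d a u u θs)
      (integrable_tanh_inner_gpdf_add d a u u θs)]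
    have hθsu : ⟪θs, u⟫ = 0 := by rw [real_inner_comm]; exact hus
    have t1 : (∫ y, Real.tanh (a * ⟪y, u⟫) * ⟪y, u⟫ * gpdf d (y - θs))
        = ∫ y, Real.tanh (a * ⟪y, u⟫) * ⟪y, u⟫ * gpdf d y := by
      have h := MeasureTheory.integral_sub_right_eq_self (μ := volume)
        (fun z : EuclideanSpace ℝ (Fin d) => Real.tanh (a * ⟪z, u⟫) * ⟪z, u⟫ * gpdf d z) θs
      rw [← h]
      congr 1; funext y
      rw [inner_sub_left, hθsu, sub_zero]
    have t2 : (∫ y, Real.tanh (a * ⟪y, u⟫) * ⟪y, u⟫ * gpdf d (y + θs))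
        = ∫ y, Real.tanh (a * ⟪y, u⟫) * ⟪y, u⟫ * gpdf d y := by
      have h := MeasureTheory.integral_add_right_eq_self (μ := volume)
        (fun z : EuclideanSpace ℝ (Fin d) => Real.tanh (a * ⟪z, u⟫) * ⟪z, u⟫ * gpdf d z) θs
      rw [← h]
      congr 1; funext y
      rw [inner_add_left, hθsu, add_zero]
    rw [t1, t2, marginal hd u hu a]
    ring
  rw [← hval]
  exact hJeq
/-- Theorem 2 (Model 1): if `⟨θ^0, θ*⟩ = 0` then `θ^t → 0`. -/
theorem stmt1 (d : ℕ) (hd : 1 ≤ d) (θs θ0 : EuclideanSpace ℝ (Fin d))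
    (h0 : ⟪θ0, θs⟫ = 0) :
    Tendsto (em1 d θs θ0) atTop (nhds 0) := by
  by_cases hθ0 : θ0 = 0
  · have hall : ∀ t, em1 d θs θ0 t = 0 := by
      intro t
      induction t with
      | zero => simp [em1, hθ0]
      | succ n ih =>
        have step : em1 d θs θ0 (n+1)
            = ∫ y, ((2 * w1 d y (em1 d θs θ0 n) - 1) * mix1 d θs y) • y := rfl
        rw [step, ih]
        have hz : ∀ y : EuclideanSpace ℝ (Fin d),
            ((2 * w1 d y 0 - 1) * mix1 d θs y) • y = 0 := by
          intro y
          have hw : w1 d y (0 : EuclideanSpace ℝ (Fin d)) = 1/2 := by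
            unfold w1
            rw [sub_zero, add_zero]
            have h := gpdf_pos d y
            rw [div_eq_iff (by linarith)]
            ring
          rw [hw]
          norm_num
        simp only [hz, integral_zero]
    have heq : em1 d θs θ0 = fun _ => (0 : EuclideanSpace ℝ (Fin d)) := funext hall
    rw [heq]
    exact tendsto_const_nhds
  · set u : EuclideanSpace ℝ (Fin d) := ‖θ0‖⁻¹ • θ0 with hudef
    have hθ0n : ‖θ0‖ ≠ 0 := norm_ne_zero_iff.mpr hθ0
    have hu : ‖u‖ = 1 := norm_smul_inv_norm hθ0
    have hus : ⟪u, θs⟫ = 0 := by rw [hudef, real_inner_smul_left, h0, mul_zero]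
    set A : ℕ → ℝ := fun t => g1^[t] ‖θ0‖ with hA
    have hAsucc : ∀ t, A (t+1) = g1 (A t) := by
      intro t
      rw [hA]
      exact Function.iterate_succ_apply' g1 t ‖θ0‖
    have hA0 : ∀ t, 0 ≤ A t := by
      intro t
      induction t with
      | zero => exact norm_nonneg θ0
      | succ n ih => rw [hAsucc]; exact g1_nonneg ih
    have hem : ∀ t, em1 d θs θ0 t = A t • u := by
      intro t
      induction t with
      | zero =>
        show θ0 = A 0 • u
        have hA00 : A 0 = ‖θ0‖ := rfl
        rw [hA00, hudef, smul_smul, mul_inv_cancel₀ hθ0n, one_smul]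
      | succ n ih =>
        have step : em1 d θs θ0 (n+1)
            = ∫ y, ((2 * w1 d y (em1 d θs θ0 n) - 1) * mix1 d θs y) • y := rfl
        rw [step, ih, em_step hd θs u hu hus (A n), hAsucc]
    have hanti : Antitone A := antitone_nat_of_succ_le (fun n => by
      rw [hAsucc]; exact g1_le_self (hA0 n))
    have hbdd : BddBelow (Set.range A) := by
      refine ⟨0, ?_⟩
      rintro x ⟨t, rfl⟩
      exact hA0 t
    have hlim := tendsto_atTop_ciInf hanti hbdd
    set L : ℝ := ⨅ t, A t with hL
    have hL0 : 0 ≤ L := le_ciInf hA0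
    have hgL : g1 L = L := by
      have h1 : Tendsto (fun t => A (t+1)) atTop (nhds L) := (tendsto_add_atTop_iff_nat 1).mpr hlim
      have h2 : Tendsto (fun t => g1 (A t)) atTop (nhds (g1 L)) :=
        (g1_continuous.tendsto L).comp hlim
      have h3 : (fun t => A (t+1)) = fun t => g1 (A t) := funext hAsucc
      rw [h3] at h1
      exact tendsto_nhds_unique h2 h1
    have hLeq : L = 0 := by
      by_contra hne
      have hpos : 0 < L := lt_of_le_of_ne hL0 (Ne.symm hne)
      have := g1_lt_self hpos
      linarith
    rw [hLeq] at hlim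
    have hfin : Tendsto (fun t => A t • u) atTop (nhds ((0:ℝ) • u)) := hlim.smul_const u
    rw [zero_smul] at hfin
    have heq : em1 d θs θ0 = fun t => A t • u := funext hem
    rw [heq]
    exact hfin
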